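/- Let u and v be CNPs of the same dimension n and let f be any cost function. For any position i ∈ [n], the f-distance from u to v is at least the f-distance from u with position i removed to v with position i removed: dist_f(u,v) ≥ dist_f(u^{-{i}}, v^{-{i}}). -/

import Mathlib

open scoped ENat

/-- A copy-number profile of dimension `n`: positions are `Fin n` (position `i+1` in 1-based terms),
values are non-negative integers. -/
abbrev CNP (n : ℕ) := Fin n → ℕ

/-- An event `(s, t, δ)`: affects 1-based positions in `[s, t]`, changing copy numbers by `δ`. -/
abbrev Event := ℕ × ℕ × ℤ

/-- A valid event has `1 ≤ s ≤ t ≤ n` and `δ ≠ 0`. -/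
def ValidEvent (n : ℕ) (e : Event) : Prop :=
  1 ≤ e.1 ∧ e.1 ≤ e.2.1 ∧ e.2.1 ≤ n ∧ e.2.2 ≠ 0

/-- Applying event `e = (s,t,δ)` to `u` : each 1-based position `i ∈ [s,t]` with `u_i > 0`
becomes `max(u_i + δ, 0)`; other positions are unchanged. -/
def applyEvent {n : ℕ} (u : CNP n) (e : Event) : CNP n :=
  fun i => if e.1 ≤ (i : ℕ) + 1 ∧ (i : ℕ) + 1 ≤ e.2.1 ∧ 0 < u i
    then ((u i : ℤ) + e.2.2).toNat else u i

/-- Applying a sequence of events in order. -/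
def applySeq {n : ℕ} (u : CNP n) (E : List Event) : CNP n :=
  E.foldl applyEvent u

/-- Cost of applying event `e` on `u` w.r.t. cost function `f`:
the maximum of `f (u_i) δ` over affected positions `i ∈ [s,t]`. -/
noncomputable def eventCost {n : ℕ} (f : ℕ → ℤ → ℕ∞) (u : CNP n) (e : Event) : ℕ∞ :=
  (Finset.univ.filter (fun i : Fin n => e.1 ≤ (i : ℕ) + 1 ∧ (i : ℕ) + 1 ≤ e.2.1)).sup
    (fun i => f (u i) e.2.2)

/-- Total cost of applying a sequence of events, costs evaluated on successive profiles. -/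
noncomputable def seqCost {n : ℕ} (f : ℕ → ℤ → ℕ∞) : CNP n → List Event → ℕ∞
  | _, [] => 0
  | u, e :: E => eventCost f u e + seqCost f (applyEvent u e) E

/-- `dist_f(u,v)`: minimum total cost of a sequence of valid events transforming `u` into `v`
(`⊤` if no such sequence exists). -/
noncomputable def distf {n : ℕ} (f : ℕ → ℤ → ℕ∞) (u v : CNP n) : ℕ∞ :=
  sInf { c | ∃ E : List Event, (∀ e ∈ E, ValidEvent n e) ∧ applySeq u E = v ∧ seqCost f u E = c }

/-- A unit-cost function takes only values `1` and `∞`. -/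
def UnitCost (f : ℕ → ℤ → ℕ∞) : Prop := ∀ c δ, f c δ = 1 ∨ f c δ = ⊤

/-- The most permissive cost function: every event costs `1`. -/
def anyCost : ℕ → ℤ → ℕ∞ := fun _ _ => 1

/-- `dist_any(u,v)`: minimum number of events transforming `u` into `v`. -/
noncomputable def distAny {n : ℕ} (u v : CNP n) : ℕ∞ := distf anyCost u v

/-- The difference vector `w = u - v` in 1-based indexing, extended by `w_0 = w_{n+1} = 0`. -/
def diffExt {n : ℕ} (u v : CNP n) (i : ℕ) : ℤ :=
  if h : 1 ≤ i ∧ i ≤ n then (u ⟨i - 1, by omega⟩ : ℤ) - (v ⟨i - 1, by omega⟩ : ℤ) else 0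

/-- `[a,b] ⊆ [0, n+1]` is a flat interval of `w` if `w` is constant on it. -/
def IsFlat (n : ℕ) (w : ℕ → ℤ) (a b : ℕ) : Prop :=
  a ≤ b ∧ b ≤ n + 1 ∧ ∀ i j, a ≤ i → i ≤ b → a ≤ j → j ≤ b → w i = w j

/-- A maximal flat interval: flat, and not properly contained in a flat interval. -/
def IsMaxFlat (n : ℕ) (w : ℕ → ℤ) (a b : ℕ) : Prop :=
  IsFlat n w a b ∧ ∀ a' b', a' ≤ a → b ≤ b' → IsFlat n w a' b' → a' = a ∧ b' = b

/-- `|F_w|`: the number of maximal flat intervals of `w` over `[0, n+1]`. -/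
noncomputable def numFlat (n : ℕ) (w : ℕ → ℤ) : ℕ :=
  Nat.card {p : ℕ × ℕ // IsMaxFlat n w p.1 p.2}

/-- Adjust an event's interval after removing 1-based position `q`. -/
def adjE (q : ℕ) (e : Event) : Event :=
  (if e.1 ≤ q then e.1 else e.1 - 1, if e.2.1 < q then e.2.1 else e.2.1 - 1, e.2.2)

/-- Adjust a list of events after removing 1-based position `q`, dropping events
that touch only position `q`. -/
def adjL (q : ℕ) (E : List Event) : List Event :=
  E.filterMap (fun e => if e.1 = q ∧ e.2.1 = q then none else some (adjE q e))

lemma adjL_nil (q : ℕ) : adjL q [] = [] := rfl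

lemma adjL_cons_drop (q : ℕ) (e : Event) (E : List Event) (h : e.1 = q ∧ e.2.1 = q) :
    adjL q (e :: E) = adjL q E := by simp [adjL, h]

lemma adjL_cons_keep (q : ℕ) (e : Event) (E : List Event) (h : ¬(e.1 = q ∧ e.2.1 = q)) :
    adjL q (e :: E) = adjE q e :: adjL q E := by simp [adjL, h]

lemma succAbove_val {n : ℕ} (i : Fin (n + 1)) (j : Fin n) :
    ((i.succAbove j : Fin (n + 1)) : ℕ) = if (j : ℕ) < (i : ℕ) then (j : ℕ) else (j : ℕ) + 1 := by
  rw [Fin.succAbove]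
  by_cases h : j.castSucc < i
  · rw [if_pos h, if_pos (by simpa [Fin.lt_def] using h)]
    rfl
  · rw [if_neg h, if_neg (by simpa [Fin.lt_def] using h)]
    rfl

lemma mem_iff_adj {n : ℕ} (i : Fin (n + 1)) (e : Event) (he : ValidEvent (n + 1) e)
    (j : Fin n) :
    ((adjE ((i : ℕ) + 1) e).1 ≤ (j : ℕ) + 1 ∧ (j : ℕ) + 1 ≤ (adjE ((i : ℕ) + 1) e).2.1) ↔
      (e.1 ≤ ((i.succAbove j : Fin (n + 1)) : ℕ) + 1 ∧
        ((i.succAbove j : Fin (n + 1)) : ℕ) + 1 ≤ e.2.1) := by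
  obtain ⟨s, t, δ⟩ := e
  obtain ⟨h1, h2, h3, _⟩ := he
  have hj := succAbove_val i j
  simp only [adjE] at *
  split_ifs at hj ⊢ <;> omega

lemma apply_comm {n : ℕ} (i : Fin (n + 1)) (u : CNP (n + 1)) (e : Event)
    (he : ValidEvent (n + 1) e) :
    (fun j : Fin n => applyEvent u e (i.succAbove j)) =
      applyEvent (fun j : Fin n => u (i.succAbove j)) (adjE ((i : ℕ) + 1) e) := by
  funext j
  simp only [applyEvent]
  have h := mem_iff_adj i e he j
  by_cases hc : e.1 ≤ ((i.succAbove j : Fin (n + 1)) : ℕ) + 1 ∧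
      ((i.succAbove j : Fin (n + 1)) : ℕ) + 1 ≤ e.2.1
  · by_cases hu : 0 < u (i.succAbove j)
    · rw [if_pos ⟨hc.1, hc.2, hu⟩, if_pos ⟨(h.mpr hc).1, (h.mpr hc).2, hu⟩]
      simp [adjE]
    · rw [if_neg (fun hh => hu hh.2.2), if_neg (fun hh => hu hh.2.2)]
  · have hc2 : ¬((adjE ((i : ℕ) + 1) e).1 ≤ (j : ℕ) + 1 ∧
        (j : ℕ) + 1 ≤ (adjE ((i : ℕ) + 1) e).2.1) := fun hh => hc (h.mp hh)
    rw [if_neg (fun hh => hc ⟨hh.1, hh.2.1⟩), if_neg (fun hh => hc2 ⟨hh.1, hh.2.1⟩)]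

lemma apply_drop {n : ℕ} (i : Fin (n + 1)) (u : CNP (n + 1)) (e : Event)
    (h : e.1 = (i : ℕ) + 1 ∧ e.2.1 = (i : ℕ) + 1) :
    (fun j : Fin n => applyEvent u e (i.succAbove j)) =
      (fun j : Fin n => u (i.succAbove j)) := by
  funext j
  simp only [applyEvent]
  rw [if_neg]
  intro ⟨h1, h2, _⟩
  have hne : i.succAbove j ≠ i := Fin.succAbove_ne i j
  have : ((i.succAbove j : Fin (n + 1)) : ℕ) ≠ (i : ℕ) := fun hh => hne (Fin.val_injective hh)
  omega

lemma adjE_valid {n : ℕ} (i : Fin (n + 1)) (e : Event) (he : ValidEvent (n + 1) e)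
    (h : ¬(e.1 = (i : ℕ) + 1 ∧ e.2.1 = (i : ℕ) + 1)) :
    ValidEvent n (adjE ((i : ℕ) + 1) e) := by
  obtain ⟨s, t, δ⟩ := e
  obtain ⟨h1, h2, h3, h4⟩ := he
  have hi : (i : ℕ) < n + 1 := i.isLt
  refine ⟨?_, ?_, ?_, h4⟩ <;> simp only [adjE] at * <;> split_ifs <;> omega

lemma cost_le {n : ℕ} (i : Fin (n + 1)) (f : ℕ → ℤ → ℕ∞) (u : CNP (n + 1)) (e : Event)
    (he : ValidEvent (n + 1) e) :
    eventCost f (fun j : Fin n => u (i.succAbove j)) (adjE ((i : ℕ) + 1) e) ≤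
      eventCost f u e := by
  apply Finset.sup_le
  intro j hj
  rw [Finset.mem_filter] at hj
  have hmem := (mem_iff_adj i e he j).mp hj.2
  have : (adjE ((i : ℕ) + 1) e).2.2 = e.2.2 := rfl
  rw [this]
  exact Finset.le_sup (f := fun p : Fin (n + 1) => f (u p) e.2.2)
    (Finset.mem_filter.mpr ⟨Finset.mem_univ _, hmem⟩)

lemma seq_le {n : ℕ} (i : Fin (n + 1)) (f : ℕ → ℤ → ℕ∞) :
    ∀ (E : List Event) (u : CNP (n + 1)), (∀ e ∈ E, ValidEvent (n + 1) e) →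
      seqCost f (fun j : Fin n => u (i.succAbove j)) (adjL ((i : ℕ) + 1) E) ≤ seqCost f u E
  | [], u, _ => by simp [adjL_nil, seqCost]
  | e :: E, u, hE => by
    have he : ValidEvent (n + 1) e := hE e List.mem_cons_self
    have hE' : ∀ e' ∈ E, ValidEvent (n + 1) e' := fun e' h' => hE e' (List.mem_cons_of_mem e h')
    by_cases hd : e.1 = (i : ℕ) + 1 ∧ e.2.1 = (i : ℕ) + 1
    · rw [adjL_cons_drop _ _ _ hd]
      calc seqCost f (fun j : Fin n => u (i.succAbove j)) (adjL ((i : ℕ) + 1) E)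
          = seqCost f (fun j : Fin n => (applyEvent u e) (i.succAbove j))
              (adjL ((i : ℕ) + 1) E) := by rw [apply_drop i u e hd]
        _ ≤ seqCost f (applyEvent u e) E := seq_le i f E (applyEvent u e) hE'
        _ ≤ seqCost f u (e :: E) := self_le_add_left _ _
    · rw [adjL_cons_keep _ _ _ hd]
      show eventCost f _ _ + seqCost f _ _ ≤ eventCost f u e + seqCost f (applyEvent u e) E
      apply add_le_add (cost_le i f u e he)
      rw [← apply_comm i u e he]
      exact seq_le i f E (applyEvent u e) hE'

lemma applySeq_comm {n : ℕ} (i : Fin (n + 1)) :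
    ∀ (E : List Event) (u : CNP (n + 1)), (∀ e ∈ E, ValidEvent (n + 1) e) →
      applySeq (fun j : Fin n => u (i.succAbove j)) (adjL ((i : ℕ) + 1) E) =
        (fun j : Fin n => (applySeq u E) (i.succAbove j))
  | [], u, _ => rfl
  | e :: E, u, hE => by
    have he : ValidEvent (n + 1) e := hE e List.mem_cons_self
    have hE' : ∀ e' ∈ E, ValidEvent (n + 1) e' := fun e' h' => hE e' (List.mem_cons_of_mem e h')
    by_cases hd : e.1 = (i : ℕ) + 1 ∧ e.2.1 = (i : ℕ) + 1
    · rw [adjL_cons_drop _ _ _ hd]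
      have h2 : applySeq u (e :: E) = applySeq (applyEvent u e) E := rfl
      rw [h2, ← applySeq_comm i E (applyEvent u e) hE', apply_drop i u e hd]
    · rw [adjL_cons_keep _ _ _ hd]
      show applySeq (applyEvent _ _) _ = _
      rw [← apply_comm i u e he]
      exact applySeq_comm i E (applyEvent u e) hE'

lemma adjL_valid {n : ℕ} (i : Fin (n + 1)) (E : List Event)
    (hE : ∀ e ∈ E, ValidEvent (n + 1) e) :
    ∀ e' ∈ adjL ((i : ℕ) + 1) E, ValidEvent n e' := by
  intro e' h'
  simp only [adjL, List.mem_filterMap] at h'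
  obtain ⟨e, heE, hsome⟩ := h'
  by_cases hd : e.1 = (i : ℕ) + 1 ∧ e.2.1 = (i : ℕ) + 1
  · simp [hd] at hsome
  · rw [if_neg hd] at hsome
    obtain rfl : adjE ((i : ℕ) + 1) e = e' := Option.some_injective _ hsome
    exact adjE_valid i e (hE e heE) hd

/-- removing a position from both CNPs can only decrease the `f`-distance:
`dist_f(u, v) ≥ dist_f(u^{-{i}}, v^{-{i}})`, for any cost function `f` (positive-valued). -/
theorem stmt2 {n : ℕ} (u v : CNP (n + 1)) (f : ℕ → ℤ → ℕ∞) (hf : ∀ c δ, 1 ≤ f c δ)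
    (i : Fin (n + 1)) :
    distf f (fun j : Fin n => u (i.succAbove j)) (fun j : Fin n => v (i.succAbove j)) ≤
      distf f u v := by
  apply le_sInf
  rintro c ⟨E, hE, happ, hcost⟩
  refine le_trans (sInf_le ?_) (hcost ▸ seq_le i f E u hE)
  exact ⟨adjL ((i : ℕ) + 1) E, adjL_valid i E hE,
    by rw [applySeq_comm i E u hE, happ], rfl⟩
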